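/- Let α ∈ (0,1). There exist universal constants A and L₀ ≥ 2 such that for all L ≥ L₀ and all x, y ∈ ℝ² with x₁, x₂ > 0, y₁ ≥ L|x|, y₂ ≥ L|x|: the kernel K₂(x,y) = −[(x₁−y₁)/|x−y|^{2+2α} − (x₁−y₁)/|x̄−y|^{2+2α} − (x₁+y₁)/|x̃−y|^{2+2α} + (x₁+y₁)/|x+y|^{2+2α}] satisfies K₂(x,y) = 8(1+α) x₂ y₁ y₂ |y|^{−4−2α} (1 + f₂(x,y)) with |f₂(x,y)| ≤ A L^{−1}. -/

import Mathlib

open Real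


lemma aux_deriv (α a : ℝ) (ha : 0 < a) (t : ℝ) :
    HasDerivAt (fun t : ℝ => a / (a ^ 2 + t ^ 2) ^ (1 + α))
      (-(2 * (1 + α) * a * t * (a ^ 2 + t ^ 2) ^ (-2 - α))) t := by
  have hpos : 0 < a ^ 2 + t ^ 2 := by positivity
  have h1 : HasDerivAt (fun t : ℝ => a ^ 2 + t ^ 2) (2 * t) t := by
    simpa using ((hasDerivAt_pow 2 t).const_add (a ^ 2))
  have h2 : HasDerivAt (fun t : ℝ => (a ^ 2 + t ^ 2) ^ (1 + α))
      (2 * t * (1 + α) * (a ^ 2 + t ^ 2) ^ (1 + α - 1)) t :=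
    h1.rpow_const (Or.inl hpos.ne')
  have h3 := (hasDerivAt_const t a).div h2 (by positivity)
  refine h3.congr_deriv ?_
  have e1 : ((a ^ 2 + t ^ 2) ^ (1 + α)) ^ 2 = (a ^ 2 + t ^ 2) ^ (2 + 2 * α) := by
    rw [sq, ← Real.rpow_add hpos]; ring_nf
  have e2 : (1 + α - 1) = α := by ring
  rw [e1, e2]
  have e3 : (a ^ 2 + t ^ 2) ^ (-2 - α) = (a ^ 2 + t ^ 2) ^ α / (a ^ 2 + t ^ 2) ^ (2 + 2 * α) := by
    rw [← Real.rpow_sub hpos]; ring_nf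
  rw [e3]
  ring

lemma aux_mvt (α a x2 y2 : ℝ) (ha : 0 < a) (hx2 : 0 < x2) :
    ∃ c, |c - y2| ≤ x2 ∧
      a / (a ^ 2 + (y2 - x2) ^ 2) ^ (1 + α) - a / (a ^ 2 + (y2 + x2) ^ 2) ^ (1 + α)
        = 4 * (1 + α) * x2 * (a * c * (a ^ 2 + c ^ 2) ^ (-2 - α)) := by
  have hlt : y2 - x2 < y2 + x2 := by linarith
  obtain ⟨c, hc, hceq⟩ := exists_hasDerivAt_eq_slope
    (fun t : ℝ => a / (a ^ 2 + t ^ 2) ^ (1 + α))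
    (fun t : ℝ => -(2 * (1 + α) * a * t * (a ^ 2 + t ^ 2) ^ (-2 - α))) hlt
    (fun t _ => (aux_deriv α a ha t).continuousAt.continuousWithinAt)
    (fun t _ => aux_deriv α a ha t)
  refine ⟨c, ?_, ?_⟩
  · rw [abs_le]; constructor <;> [linarith [hc.1]; linarith [hc.2]]
  · have h2x : y2 + x2 - (y2 - x2) = 2 * x2 := by ring
    rw [h2x] at hceq
    rw [eq_div_iff (by positivity : (2:ℝ) * x2 ≠ 0)] at hceq
    linear_combination hceq



lemma aux_pow6_upper (r : ℝ) (hr0 : 0 < r) (hr10 : r ≤ 1 / 10) :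
    ((1 - r) ^ 6)⁻¹ ≤ 1 + 15 * r := by
  have h1r : (0:ℝ) < 1 - r := by linarith
  rw [← one_div, div_le_iff₀ (pow_pos h1r 6)]
  have hb : (1:ℝ) + 6 * (-r) ≤ (1 + (-r)) ^ 6 :=
    one_add_mul_le_pow (by linarith : (-2:ℝ) ≤ -r) 6
  have hb' : (1:ℝ) - 6 * r ≤ (1 - r) ^ 6 := by
    have he : (1:ℝ) + (-r) = 1 - r := by ring
    rw [he] at hb; linarith
  have hb2 : (1 + 15 * r) * (1 - 6 * r) ≤ (1 + 15 * r) * (1 - r) ^ 6 :=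
    mul_le_mul_of_nonneg_left hb' (by linarith)
  have hexp : (1:ℝ) ≤ (1 + 15 * r) * (1 - 6 * r) := by
    nlinarith [mul_nonneg hr0.le (by linarith : (0:ℝ) ≤ 1/10 - r)]
  linarith

lemma aux_pow6_lower (r : ℝ) (hr0 : 0 < r) (hr10 : r ≤ 1 / 10) :
    1 - 6 * r ≤ ((1 + r) ^ 6)⁻¹ := by
  rw [← one_div, le_div_iff₀ (by positivity : (0:ℝ) < (1 + r) ^ 6)]
  nlinarith [pow_nonneg hr0.le 2, pow_nonneg hr0.le 3, pow_nonneg hr0.le 4,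
    pow_nonneg hr0.le 5, pow_nonneg hr0.le 6, pow_nonneg hr0.le 7]

lemma aux_coef_lower (r : ℝ) (hr0 : 0 < r) (hr10 : r ≤ 1 / 10) :
    1 - 1600 * r ≤ (1 - r) ^ 2 * (1 - 6 * r) := by
  nlinarith [sq_nonneg r, mul_nonneg hr0.le (sq_nonneg r)]

lemma aux_coef_upper (r : ℝ) (hr0 : 0 < r) (hr10 : r ≤ 1 / 10) :
    (1 + r) ^ 2 * (1 + 15 * r) ≤ 1 + 1600 * r := by
  nlinarith [sq_nonneg r, mul_nonneg hr0.le (sq_nonneg r)]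

set_option maxHeartbeats 2000000 in
lemma aux_ratio (α r a c y1 y2 : ℝ) (hα : 0 < α) (hα1 : α < 1)
    (hr0 : 0 < r) (hr10 : r ≤ 1 / 10)
    (hy1 : 0 < y1) (hy2 : 0 < y2) (hay : |a - y1| ≤ r * y1) (hcy : |c - y2| ≤ r * y2) :
    |a * c * (a ^ 2 + c ^ 2) ^ (-2 - α) - y1 * y2 * (y1 ^ 2 + y2 ^ 2) ^ (-2 - α)|
      ≤ (1600 * r) * (y1 * y2 * (y1 ^ 2 + y2 ^ 2) ^ (-2 - α)) := by
  rw [abs_le] at hay hcy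
  have ha_lo : (1 - r) * y1 ≤ a := by nlinarith [hay.1]
  have ha_hi : a ≤ (1 + r) * y1 := by nlinarith [hay.2]
  have hc_lo : (1 - r) * y2 ≤ c := by nlinarith [hcy.1]
  have hc_hi : c ≤ (1 + r) * y2 := by nlinarith [hcy.2]
  have ha0 : 0 < a := lt_of_lt_of_le (by nlinarith) ha_lo
  have hc0 : 0 < c := lt_of_lt_of_le (by nlinarith) hc_lo
  have hS : 0 < y1 ^ 2 + y2 ^ 2 := by positivity
  have hQ : 0 < a ^ 2 + c ^ 2 := by positivity
  have hS0 : 0 < (y1 ^ 2 + y2 ^ 2) ^ (-2 - α) := rpow_pos_of_pos hS _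
  have h1r : (0:ℝ) < 1 - r := by linarith
  have hq_lo : (1 - r) ^ 2 * (y1 ^ 2 + y2 ^ 2) ≤ a ^ 2 + c ^ 2 := by
    nlinarith [mul_self_le_mul_self (by positivity : (0:ℝ) ≤ (1 - r) * y1) ha_lo,
      mul_self_le_mul_self (by positivity : (0:ℝ) ≤ (1 - r) * y2) hc_lo]
  have hq_hi : a ^ 2 + c ^ 2 ≤ (1 + r) ^ 2 * (y1 ^ 2 + y2 ^ 2) := by
    nlinarith [mul_self_le_mul_self ha0.le ha_hi, mul_self_le_mul_self hc0.le hc_hi]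
  -- upper bound for the rpow factor
  have hup1 : (a ^ 2 + c ^ 2) ^ (-2 - α)
      ≤ ((1 - r) ^ 2) ^ (-2 - α) * (y1 ^ 2 + y2 ^ 2) ^ (-2 - α) := by
    rw [← Real.mul_rpow (by positivity) hS.le]
    exact Real.rpow_le_rpow_of_nonpos (by positivity) hq_lo (by linarith)
  have hup2 : ((1 - r) ^ 2) ^ (-2 - α) ≤ ((1 - r) ^ 2) ^ ((-3 : ℝ)) :=
    Real.rpow_le_rpow_of_exponent_ge (by positivity) (by nlinarith) (by linarith)
  have hup3 : ((1 - r) ^ 2) ^ ((-3 : ℝ)) = ((1 - r) ^ 6)⁻¹ := by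
    rw [show ((-3 : ℝ)) = ((-3 : ℤ) : ℝ) by norm_num, Real.rpow_intCast]
    rw [zpow_neg, show ((3:ℤ)) = ((3:ℕ):ℤ) by norm_num, zpow_natCast, ← pow_mul]
  have hup4 : ((1 - r) ^ 6)⁻¹ ≤ 1 + 15 * r := aux_pow6_upper r hr0 hr10
  have hQup : (a ^ 2 + c ^ 2) ^ (-2 - α) ≤ (1 + 15 * r) * (y1 ^ 2 + y2 ^ 2) ^ (-2 - α) := by
    have hmid2 : ((1 - r) ^ 2) ^ (-2 - α) ≤ 1 + 15 * r :=
      le_trans (le_trans hup2 hup3.le) hup4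
    exact le_trans hup1 (mul_le_mul_of_nonneg_right hmid2 hS0.le)
  -- lower bound for the rpow factor
  have hlo1 : ((1 + r) ^ 2) ^ (-2 - α) * (y1 ^ 2 + y2 ^ 2) ^ (-2 - α)
      ≤ (a ^ 2 + c ^ 2) ^ (-2 - α) := by
    rw [← Real.mul_rpow (by positivity) hS.le]
    exact Real.rpow_le_rpow_of_nonpos hQ hq_hi (by linarith)
  have hlo2 : ((1 + r) ^ 2) ^ ((-3 : ℝ)) ≤ ((1 + r) ^ 2) ^ (-2 - α) :=
    Real.rpow_le_rpow_of_exponent_le (by nlinarith) (by linarith)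
  have hlo3 : ((1 + r) ^ 2) ^ ((-3 : ℝ)) = ((1 + r) ^ 6)⁻¹ := by
    rw [show ((-3 : ℝ)) = ((-3 : ℤ) : ℝ) by norm_num, Real.rpow_intCast]
    rw [zpow_neg, show ((3:ℤ)) = ((3:ℕ):ℤ) by norm_num, zpow_natCast, ← pow_mul]
  have hlo4 : 1 - 6 * r ≤ ((1 + r) ^ 6)⁻¹ := aux_pow6_lower r hr0 hr10
  have hmid : (1 - 6 * r : ℝ) ≤ ((1 + r) ^ 2) ^ (-2 - α) :=
    le_trans (le_trans hlo4 hlo3.symm.le) hlo2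
  have hQlo : (1 - 6 * r) * (y1 ^ 2 + y2 ^ 2) ^ (-2 - α) ≤ (a ^ 2 + c ^ 2) ^ (-2 - α) :=
    le_trans (mul_le_mul_of_nonneg_right hmid hS0.le) hlo1
  -- assemble
  have hac_hi : a * c ≤ (1 + r) ^ 2 * (y1 * y2) := by
    nlinarith [mul_le_mul ha_hi hc_hi hc0.le (by positivity : (0:ℝ) ≤ (1 + r) * y1)]
  have hac_lo : (1 - r) ^ 2 * (y1 * y2) ≤ a * c := by
    nlinarith [mul_le_mul ha_lo hc_lo (by positivity : (0:ℝ) ≤ (1 - r) * y2) ha0.le]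
  have hQnn : (0:ℝ) ≤ (a ^ 2 + c ^ 2) ^ (-2 - α) := (rpow_pos_of_pos hQ _).le
  have hupper : a * c * (a ^ 2 + c ^ 2) ^ (-2 - α)
      ≤ ((1 + r) ^ 2 * (y1 * y2)) * ((1 + 15 * r) * (y1 ^ 2 + y2 ^ 2) ^ (-2 - α)) :=
    mul_le_mul hac_hi hQup hQnn (by positivity)
  have hlower : ((1 - r) ^ 2 * (y1 * y2)) * ((1 - 6 * r) * (y1 ^ 2 + y2 ^ 2) ^ (-2 - α))
      ≤ a * c * (a ^ 2 + c ^ 2) ^ (-2 - α) := by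
    rcases le_or_gt (1 - 6 * r) 0 with h | h
    · have h1 : ((1 - r) ^ 2 * (y1 * y2)) * ((1 - 6 * r) * (y1 ^ 2 + y2 ^ 2) ^ (-2 - α)) ≤ 0 :=
        mul_nonpos_of_nonneg_of_nonpos (by positivity)
          (mul_nonpos_of_nonpos_of_nonneg h hS0.le)
      exact le_trans h1 (by positivity)
    · exact mul_le_mul hac_lo hQlo (by positivity) (by positivity)
  have hP : (0:ℝ) < y1 * y2 * (y1 ^ 2 + y2 ^ 2) ^ (-2 - α) := by positivity
  have hcoef1 : (1 - 1600 * r) ≤ (1 - r) ^ 2 * (1 - 6 * r) := aux_coef_lower r hr0 hr10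
  have hcoef2 : (1 + r) ^ 2 * (1 + 15 * r) ≤ 1 + 1600 * r := aux_coef_upper r hr0 hr10
  have hlow2 : (1 - 1600 * r) * (y1 * y2 * (y1 ^ 2 + y2 ^ 2) ^ (-2 - α))
      ≤ a * c * (a ^ 2 + c ^ 2) ^ (-2 - α) := by
    have h1 := mul_le_mul_of_nonneg_right hcoef1 hP.le
    have h2 : ((1 - r) ^ 2 * (1 - 6 * r)) * (y1 * y2 * (y1 ^ 2 + y2 ^ 2) ^ (-2 - α))
        = ((1 - r) ^ 2 * (y1 * y2)) * ((1 - 6 * r) * (y1 ^ 2 + y2 ^ 2) ^ (-2 - α)) := by ring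
    rw [h2] at h1
    linarith [hlower, h1]
  have hup2' : a * c * (a ^ 2 + c ^ 2) ^ (-2 - α)
      ≤ (1 + 1600 * r) * (y1 * y2 * (y1 ^ 2 + y2 ^ 2) ^ (-2 - α)) := by
    have h1 := mul_le_mul_of_nonneg_right hcoef2 hP.le
    have h2 : ((1 + r) ^ 2 * (1 + 15 * r)) * (y1 * y2 * (y1 ^ 2 + y2 ^ 2) ^ (-2 - α))
        = ((1 + r) ^ 2 * (y1 * y2)) * ((1 + 15 * r) * (y1 ^ 2 + y2 ^ 2) ^ (-2 - α)) := by ring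
    rw [h2] at h1
    linarith [hupper, h1]
  rw [abs_le]
  constructor
  · linarith [hlow2]
  · linarith [hup2']

lemma aux_sqrt_pow (β u : ℝ) (hu : 0 ≤ u) : Real.sqrt u ^ (2 + 2 * β) = u ^ (1 + β) := by
  rw [Real.sqrt_eq_rpow, ← Real.rpow_mul hu]
  norm_num
  rw [show (1/2) * (2 + 2*β) = 1 + β by ring]

lemma aux_sqrt_pow' (β u : ℝ) (hu : 0 ≤ u) : Real.sqrt u ^ (-4 - 2 * β) = u ^ (-2 - β) := by
  rw [Real.sqrt_eq_rpow, ← Real.rpow_mul hu]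
  norm_num
  rw [show (1/2) * (-4 - 2*β) = -2 - β by ring]

/-- pointwise asymptotics for the symmetrized kernel K₂ (equation (2.17)). -/
theorem stmt_8 (α : ℝ) (hα : 0 < α) (hα1 : α < 1) :
    ∃ A > 0, ∃ L0 : ℝ, 2 ≤ L0 ∧ ∀ L : ℝ, L0 ≤ L →
      ∀ x1 x2 y1 y2 : ℝ, 0 < x1 → 0 < x2 →
        L * Real.sqrt (x1 ^ 2 + x2 ^ 2) ≤ y1 →
        L * Real.sqrt (x1 ^ 2 + x2 ^ 2) ≤ y2 →
        ∃ f2 : ℝ, |f2| ≤ A / L ∧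
          -((x1 - y1) / (Real.sqrt ((x1 - y1) ^ 2 + (x2 - y2) ^ 2)) ^ (2 + 2 * α)
            - (x1 - y1) / (Real.sqrt ((x1 - y1) ^ 2 + (x2 + y2) ^ 2)) ^ (2 + 2 * α)
            - (x1 + y1) / (Real.sqrt ((x1 + y1) ^ 2 + (x2 - y2) ^ 2)) ^ (2 + 2 * α)
            + (x1 + y1) / (Real.sqrt ((x1 + y1) ^ 2 + (x2 + y2) ^ 2)) ^ (2 + 2 * α))
          = 8 * (1 + α) * x2 * y1 * y2
              * (Real.sqrt (y1 ^ 2 + y2 ^ 2)) ^ (-4 - 2 * α) * (1 + f2) := by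
  refine ⟨1600, by norm_num, 10, by norm_num, ?_⟩
  intro L hL x1 x2 y1 y2 hx1 hx2 hy1L hy2L
  have hL0 : (0:ℝ) < L := by linarith
  have hn : 0 < Real.sqrt (x1 ^ 2 + x2 ^ 2) := Real.sqrt_pos.mpr (by positivity)
  have hy1 : 0 < y1 := lt_of_lt_of_le (by positivity) hy1L
  have hy2 : 0 < y2 := lt_of_lt_of_le (by positivity) hy2L
  have hx1n : x1 ≤ Real.sqrt (x1 ^ 2 + x2 ^ 2) := by
    have h := Real.sqrt_le_sqrt (show x1 ^ 2 ≤ x1 ^ 2 + x2 ^ 2 by nlinarith)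
    rwa [Real.sqrt_sq hx1.le] at h
  have hx2n : x2 ≤ Real.sqrt (x1 ^ 2 + x2 ^ 2) := by
    have h := Real.sqrt_le_sqrt (show x2 ^ 2 ≤ x1 ^ 2 + x2 ^ 2 by nlinarith)
    rwa [Real.sqrt_sq hx2.le] at h
  have hx1y : L * x1 ≤ y1 :=
    le_trans (mul_le_mul_of_nonneg_left hx1n hL0.le) hy1L
  have hx2y2 : L * x2 ≤ y2 :=
    le_trans (mul_le_mul_of_nonneg_left hx2n hL0.le) hy2L
  have hr0 : (0:ℝ) < 1 / L := by positivity
  have hr10 : 1 / L ≤ 1 / 10 := by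
    rw [div_le_div_iff₀ hL0 (by norm_num)]; linarith
  have hx1r : x1 ≤ (1 / L) * y1 := by
    rw [div_mul_eq_mul_div, le_div_iff₀ hL0]; linarith
  have hx2r : x2 ≤ (1 / L) * y2 := by
    rw [div_mul_eq_mul_div, le_div_iff₀ hL0]; linarith
  have ha1 : 0 < y1 - x1 := by nlinarith
  have ha2 : 0 < y1 + x1 := by linarith
  obtain ⟨c1, hc1, hm1⟩ := aux_mvt α (y1 - x1) x2 y2 ha1 hx2
  obtain ⟨c2, hc2, hm2⟩ := aux_mvt α (y1 + x1) x2 y2 ha2 hx2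
  set ψ0 : ℝ := y1 * y2 * (y1 ^ 2 + y2 ^ 2) ^ (-2 - α) with hψ0
  set ψ1 : ℝ := (y1 - x1) * c1 * ((y1 - x1) ^ 2 + c1 ^ 2) ^ (-2 - α) with hψ1
  set ψ2 : ℝ := (y1 + x1) * c2 * ((y1 + x1) ^ 2 + c2 ^ 2) ^ (-2 - α) with hψ2
  have hψ0pos : 0 < ψ0 := by
    rw [hψ0]; positivity
  -- ratio estimates
  have hr1 : |ψ1 - ψ0| ≤ (1600 * (1 / L)) * ψ0 := by
    rw [hψ1, hψ0]
    exact aux_ratio α (1/L) (y1 - x1) c1 y1 y2 hα hα1 hr0 hr10 hy1 hy2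
      (by rw [show y1 - x1 - y1 = -x1 by ring, abs_neg, abs_of_pos hx1]; exact hx1r)
      (le_trans hc1 hx2r)
  have hr2 : |ψ2 - ψ0| ≤ (1600 * (1 / L)) * ψ0 := by
    rw [hψ2, hψ0]
    exact aux_ratio α (1/L) (y1 + x1) c2 y1 y2 hα hα1 hr0 hr10 hy1 hy2
      (by rw [show y1 + x1 - y1 = x1 by ring, abs_of_pos hx1]; exact hx1r)
      (le_trans hc2 hx2r)
  refine ⟨(ψ1 + ψ2) / (2 * ψ0) - 1, ?_, ?_⟩
  · have heq : (ψ1 + ψ2) / (2 * ψ0) - 1 = ((ψ1 - ψ0) + (ψ2 - ψ0)) / (2 * ψ0) := by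
      field_simp
      ring
    rw [heq, abs_div, abs_of_pos (by positivity : (0:ℝ) < 2 * ψ0),
      div_le_iff₀ (by positivity : (0:ℝ) < 2 * ψ0)]
    calc |ψ1 - ψ0 + (ψ2 - ψ0)| ≤ |ψ1 - ψ0| + |ψ2 - ψ0| := abs_add_le _ _
    _ ≤ (1600 * (1 / L)) * ψ0 + (1600 * (1 / L)) * ψ0 := add_le_add hr1 hr2
    _ = 1600 / L * (2 * ψ0) := by ring
  · -- the identity
    have s1 : Real.sqrt ((x1 - y1) ^ 2 + (x2 - y2) ^ 2) ^ (2 + 2 * α)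
        = ((y1 - x1) ^ 2 + (y2 - x2) ^ 2) ^ (1 + α) := by
      rw [show (x1 - y1) ^ 2 + (x2 - y2) ^ 2 = (y1 - x1) ^ 2 + (y2 - x2) ^ 2 by ring]
      exact aux_sqrt_pow α _ (by positivity)
    have s2 : Real.sqrt ((x1 - y1) ^ 2 + (x2 + y2) ^ 2) ^ (2 + 2 * α)
        = ((y1 - x1) ^ 2 + (y2 + x2) ^ 2) ^ (1 + α) := by
      rw [show (x1 - y1) ^ 2 + (x2 + y2) ^ 2 = (y1 - x1) ^ 2 + (y2 + x2) ^ 2 by ring]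
      exact aux_sqrt_pow α _ (by positivity)
    have s3 : Real.sqrt ((x1 + y1) ^ 2 + (x2 - y2) ^ 2) ^ (2 + 2 * α)
        = ((y1 + x1) ^ 2 + (y2 - x2) ^ 2) ^ (1 + α) := by
      rw [show (x1 + y1) ^ 2 + (x2 - y2) ^ 2 = (y1 + x1) ^ 2 + (y2 - x2) ^ 2 by ring]
      exact aux_sqrt_pow α _ (by positivity)
    have s4 : Real.sqrt ((x1 + y1) ^ 2 + (x2 + y2) ^ 2) ^ (2 + 2 * α)
        = ((y1 + x1) ^ 2 + (y2 + x2) ^ 2) ^ (1 + α) := by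
      rw [show (x1 + y1) ^ 2 + (x2 + y2) ^ 2 = (y1 + x1) ^ 2 + (y2 + x2) ^ 2 by ring]
      exact aux_sqrt_pow α _ (by positivity)
    have sR : Real.sqrt (y1 ^ 2 + y2 ^ 2) ^ (-4 - 2 * α)
        = (y1 ^ 2 + y2 ^ 2) ^ (-2 - α) := aux_sqrt_pow' α _ (by positivity)
    rw [s1, s2, s3, s4, sR]
    have hR : 8 * (1 + α) * x2 * y1 * y2 * (y1 ^ 2 + y2 ^ 2) ^ (-2 - α)
        * (1 + ((ψ1 + ψ2) / (2 * ψ0) - 1)) = 4 * (1 + α) * x2 * (ψ1 + ψ2) := by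
      rw [hψ0]
      field_simp
      ring
    rw [hψ0] at hR
    linear_combination hm1 + hm2 - hR
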